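/- If X and Y are compact Hausdorff spaces and there exists a bi-Lipschitz bijection T : C(X) → C(Y) with T(0) = 0 satisfying (1/M)‖f−g‖ ≤ ‖Tf−Tg‖ ≤ M‖f−g‖ for M < √1.2, then there is a homeomorphism φ : X → Y such that | |Tf(φ(x))| − |f(x)| | ≤ 5(M²−M)‖f‖ for all f ∈ C(X) and x ∈ X. -/

import Mathlib

set_option maxHeartbeats 1000000

open Set

namespace CBS

/-- A bump function: valued in `[0,1]`, equal to `1` at `z0`, vanishing outside `V`. -/
def Bump {Z : Type} [TopologicalSpace Z] (u : C(Z, ℝ)) (V : Set Z) (z0 : Z) : Prop :=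
  (∀ z, 0 ≤ u z ∧ u z ≤ 1) ∧ u z0 = 1 ∧ ∀ z, z ∉ V → u z = 0

lemma exists_bump {Z : Type} [TopologicalSpace Z] [CompactSpace Z] [T2Space Z]
    {V : Set Z} (hV : IsOpen V) {x : Z} (hx : x ∈ V) : ∃ u : C(Z, ℝ), Bump u V x := by
  obtain ⟨u, h0, h1, h01⟩ := exists_continuous_zero_one_of_isClosed
    (hV.isClosed_compl) (isClosed_singleton (x := x))
    (Set.disjoint_singleton_right.mpr (by simp [hx]))
  exact ⟨u, fun z => (h01 z).imp id id, h1 rfl, fun z hz => h0 hz⟩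

lemma Bump.norm_eq_one {Z : Type} [TopologicalSpace Z] [CompactSpace Z]
    {u : C(Z, ℝ)} {V : Set Z} {z0 : Z} (hB : Bump u V z0) : ‖u‖ = 1 := by
  refine le_antisymm ?_ ?_
  · exact (ContinuousMap.norm_le u zero_le_one).mpr fun z => by
      rw [Real.norm_eq_abs, abs_le]; exact ⟨by linarith [(hB.1 z).1], (hB.1 z).2⟩
  · calc (1:ℝ) = |u z0| := by rw [hB.2.1]; norm_num
    _ = ‖u z0‖ := rfl
    _ ≤ ‖u‖ := ContinuousMap.norm_coe_le_norm u z0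

lemma exists_max_abs {Z : Type} [TopologicalSpace Z] [CompactSpace Z] (hZ : Nonempty Z)
    (h : C(Z, ℝ)) : ∃ y, ‖h‖ ≤ |h y| := by
  obtain ⟨y, -, hy⟩ := isCompact_univ.exists_isMaxOn univ_nonempty
    (Continuous.continuousOn (by continuity : Continuous (fun z => |h z|)))
  refine ⟨y, (ContinuousMap.norm_le h (abs_nonneg _)).mpr fun z => hy (mem_univ z)⟩


lemma norm_smul_cm {Z : Type} [TopologicalSpace Z] [CompactSpace Z] (r : ℝ) (f : C(Z, ℝ)) :
    ‖r • f‖ = |r| * ‖f‖ := by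
  rw [show |r| = ‖r‖ from rfl, ← norm_smul]

lemma abs_apply_le_norm {Z : Type} [TopologicalSpace Z] [CompactSpace Z] (h : C(Z, ℝ)) (z : Z) :
    |h z| ≤ ‖h‖ := by rw [← Real.norm_eq_abs]; exact h.norm_coe_le_norm z

variable {X Y : Type} [TopologicalSpace X] [CompactSpace X] [T2Space X]
  [TopologicalSpace Y] [CompactSpace Y] [T2Space Y]

/-- The hypothesis pack, symmetric in `T`/`S`. -/
structure Pack (M : ℝ) (T : C(X, ℝ) → C(Y, ℝ)) (S : C(Y, ℝ) → C(X, ℝ)) : Prop where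
  hM1 : 1 ≤ M
  hM6 : M ^ 2 ≤ 6/5
  hTS : ∀ f, S (T f) = f
  hST : ∀ g, T (S g) = g
  hT0 : T 0 = 0
  hS0 : S 0 = 0
  hTlip : ∀ f g, ‖T f - T g‖ ≤ M * ‖f - g‖
  hSlip : ∀ g₁ g₂, ‖S g₁ - S g₂‖ ≤ M * ‖g₁ - g₂‖

variable {M : ℝ} {T : C(X, ℝ) → C(Y, ℝ)} {S : C(Y, ℝ) → C(X, ℝ)}

def Pack.symm (hp : Pack M T S) : Pack M S T :=
  ⟨hp.hM1, hp.hM6, hp.hST, hp.hTS, hp.hS0, hp.hT0, hp.hSlip, hp.hTlip⟩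

lemma Pack.M0 (hp : Pack M T S) : 0 < M := lt_of_lt_of_le one_pos hp.hM1

lemma Pack.low (hp : Pack M T S) (f g : C(X, ℝ)) : ‖f - g‖ ≤ M * ‖T f - T g‖ := by
  have h := hp.hSlip (T f) (T g); rwa [hp.hTS, hp.hTS] at h

lemma Pack.normT (hp : Pack M T S) (f : C(X, ℝ)) : ‖T f‖ ≤ M * ‖f‖ := by
  have h := hp.hTlip f 0; rwa [hp.hT0, sub_zero, sub_zero] at h

lemma Pack.hM11 (hp : Pack M T S) : M ≤ 11/10 := by nlinarith [hp.hM6, hp.M0]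

lemma Pack.hM3 (hp : Pack M T S) : M^3 ≤ (6/5) * M := by nlinarith [hp.hM6, hp.M0]

/-- Pinned pair of values at `yt` for the bump `u` at scale `lam`, with sign `σ`. -/
def Pin (M : ℝ) (T : C(X, ℝ) → C(Y, ℝ)) (lam : ℝ) (u : C(X, ℝ)) (σ : ℝ) (yt : Y) : Prop :=
  (2 - M^2)/M * lam ≤ σ * T (lam • u) yt ∧ σ * T (-(lam • u)) yt ≤ -((2 - M^2)/M * lam)

def PinA (M : ℝ) (T : C(X, ℝ) → C(Y, ℝ)) (x : X) (lam : ℝ) (V : Set X) : Set Y :=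
  {yt | ∃ u x0 σ, Bump u V x0 ∧ (σ = 1 ∨ σ = -1) ∧ Pin M T lam u σ yt}

def Kset (M : ℝ) (T : C(X, ℝ) → C(Y, ℝ)) (x : X) (lam : ℝ) : Set Y :=
  ⋂ (V : Set X) (_ : IsOpen V ∧ x ∈ V), closure (PinA M T x lam V)

/-- Supply of pinned points: for every nbhd `V` of `x` and `W` of `y`, there is a bump
supported in `V` pinned at a point of `W`. -/
def SupT (M : ℝ) (T : C(X, ℝ) → C(Y, ℝ)) (x : X) (y : Y) (lam : ℝ) : Prop :=
  ∀ V W, IsOpen V → x ∈ V → IsOpen W → y ∈ W →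
    ∃ u x0 σ yt, Bump u V x0 ∧ (σ = 1 ∨ σ = -1) ∧ yt ∈ W ∧ Pin M T lam u σ yt

/-- Pair-existence: every bump has a pinned point somewhere. -/
lemma pin_exists (hp : Pack M T S) (hY : Nonempty Y) {u : C(X, ℝ)} {V : Set X} {x0 : X}
    (hB : Bump u V x0) {lam : ℝ} (hlam : 0 < lam) :
    ∃ σ yt, (σ = 1 ∨ σ = -1) ∧ Pin M T lam u σ yt := by
  have hM0 := hp.M0
  have hnu : ‖u‖ = 1 := hB.norm_eq_one
  have hdiff : ‖lam • u - -(lam • u)‖ = 2 * lam := by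
    rw [sub_neg_eq_add, ← two_smul ℝ (lam • u), smul_smul, norm_smul_cm, hnu,
      abs_of_pos (by linarith : (0:ℝ) < 2 * lam), mul_one]
  have hlow : 2 * lam ≤ M * ‖T (lam • u) - T (-(lam • u))‖ := by
    have := hp.low (lam • u) (-(lam • u)); rwa [hdiff] at this
  obtain ⟨y₀, hy₀⟩ := exists_max_abs hY (T (lam • u) - T (-(lam • u)))
  have hy₀' : 2 * lam ≤ M * |T (lam • u) y₀ - T (-(lam • u)) y₀| := by
    calc 2 * lam ≤ M * ‖T (lam • u) - T (-(lam • u))‖ := hlow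
    _ ≤ M * |(T (lam • u) - T (-(lam • u))) y₀| :=
        mul_le_mul_of_nonneg_left hy₀ (le_of_lt hM0)
    _ = M * |T (lam • u) y₀ - T (-(lam • u)) y₀| := by rw [ContinuousMap.sub_apply]
  have ha : |T (lam • u) y₀| ≤ M * lam := by
    calc |T (lam • u) y₀| ≤ ‖T (lam • u)‖ := abs_apply_le_norm _ _
    _ ≤ M * ‖lam • u‖ := hp.normT _
    _ = M * lam := by rw [norm_smul_cm, hnu, abs_of_pos hlam, mul_one]
  have hb : |T (-(lam • u)) y₀| ≤ M * lam := by
    calc |T (-(lam • u)) y₀| ≤ ‖T (-(lam • u))‖ := abs_apply_le_norm _ _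
    _ ≤ M * ‖(-(lam • u))‖ := hp.normT _
    _ = M * lam := by
        rw [norm_neg, norm_smul_cm, hnu, abs_of_pos hlam, mul_one]
  have habs := abs_le.mp ha
  have hbabs := abs_le.mp hb
  set a := T (lam • u) y₀ with ha_def
  set b := T (-(lam • u)) y₀ with hb_def
  have hC : (2 - M^2)/M * lam = 2 * lam / M - M * lam := by field_simp
  rcases abs_cases (a - b) with ⟨heq, -⟩ | ⟨heq, -⟩
  · rw [heq] at hy₀'
    have hdiv : 2 * lam / M ≤ a - b := by
      rw [div_le_iff₀ hM0]; linarith [mul_comm M (a - b)]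
    refine ⟨1, y₀, Or.inl rfl, ?_, ?_⟩
    · rw [one_mul]; linarith [hbabs.1]
    · rw [one_mul]; linarith [habs.2]
  · rw [show |a - b| = b - a by linarith] at hy₀'
    have hdiv : 2 * lam / M ≤ b - a := by
      rw [div_le_iff₀ hM0]; linarith [mul_comm M (b - a)]
    refine ⟨-1, y₀, Or.inr rfl, ?_, ?_⟩
    · rw [neg_one_mul]; linarith [hbabs.2]
    · rw [neg_one_mul]; linarith [habs.1]

lemma exists_K (hp : Pack M T S) (hY : Nonempty Y) (x : X) {lam : ℝ} (hlam : 0 < lam) :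
    ∃ y, y ∈ Kset M T x lam := by
  haveI : Nonempty {V : Set X // IsOpen V ∧ x ∈ V} := ⟨⟨univ, isOpen_univ, mem_univ x⟩⟩
  set Z : {V : Set X // IsOpen V ∧ x ∈ V} → Set Y :=
    fun V => closure (PinA M T x lam V.1) with hZ
  have hne : ∀ V, (Z V).Nonempty := by
    intro V
    obtain ⟨u, hu⟩ := exists_bump V.2.1 V.2.2
    obtain ⟨σ, yt, hσ, hpin⟩ := pin_exists hp hY hu hlam
    exact ⟨yt, subset_closure ⟨u, x, σ, hu, hσ, hpin⟩⟩
  have hmono : ∀ V V' : Set X, V ⊆ V' → PinA M T x lam V ⊆ PinA M T x lam V' := by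
    rintro V V' hVV' yt ⟨u, x0, σ, hB, hσ, hpin⟩
    exact ⟨u, x0, σ, ⟨hB.1, hB.2.1, fun z hz => hB.2.2 z (fun hz' => hz (hVV' hz'))⟩, hσ, hpin⟩
  have hdir : Directed (· ⊇ ·) Z := by
    intro V₁ V₂
    exact ⟨⟨V₁.1 ∩ V₂.1, V₁.2.1.inter V₂.2.1, ⟨V₁.2.2, V₂.2.2⟩⟩,
      closure_mono (hmono _ _ inter_subset_left),
      closure_mono (hmono _ _ inter_subset_right)⟩
  obtain ⟨y, hy⟩ := IsCompact.nonempty_iInter_of_directed_nonempty_isCompact_isClosed Z hdir hne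
    (fun V => isClosed_closure.isCompact) (fun V => isClosed_closure)
  refine ⟨y, ?_⟩
  rw [Kset]
  refine mem_iInter₂.mpr fun V hV => ?_
  exact mem_iInter.mp hy ⟨V, hV⟩

lemma K_supT {x : X} {y : Y} {lam : ℝ} (hy : y ∈ Kset M T x lam) : SupT M T x y lam := by
  intro V W hV hxV hW hyW
  have h1 : y ∈ closure (PinA M T x lam V) := mem_iInter₂.mp hy V ⟨hV, hxV⟩
  obtain ⟨yt, hytW, u, x0, σ, hB, hσ, hpin⟩ := mem_closure_iff.mp h1 W hW hyW
  exact ⟨u, x0, σ, yt, hB, hσ, hytW, hpin⟩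

/-- Localization lemma (LINK). -/
lemma link (hp : Pack M T S) (hY : Nonempty Y) {lam : ℝ} (hlam : 0 < lam)
    {u : C(X, ℝ)} (hu01 : ∀ z, 0 ≤ u z ∧ u z ≤ 1) {σ : ℝ} (hσ : σ = 1 ∨ σ = -1)
    {v : C(Y, ℝ)} (hv01 : ∀ z, 0 ≤ v z ∧ v z ≤ 1)
    (hvsupp : ∀ z, v z ≠ 0 →
      ((2 - M^2)/M - 1/10) * lam < σ * T (lam • u) z ∧
      σ * T (-(lam • u)) z < -(((2 - M^2)/M - 1/10) * lam))
    {xs : X}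
    (hk : S (lam • v) xs ≤ -((2 - M^2)/M * lam) ∨
          S (-(lam • v)) xs ≤ -((2 - M^2)/M * lam)) :
    xs ∈ closure {z | u z ≠ 0} := by
  have hM0 := hp.M0
  have hM6 := hp.hM6
  have hM1 := hp.hM1
  have hM3 := hp.hM3
  have hM11 := hp.hM11
  by_contra hcl
  obtain ⟨p, hp0, hp1, hp01⟩ := exists_continuous_zero_one_of_isClosed
    isClosed_closure (isClosed_singleton (x := xs))
    (Set.disjoint_singleton_right.mpr hcl)
  set C := (2 - M^2)/M with hCdef
  have hpxs : p xs = 1 := by simpa using hp1 rfl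
  have hCM : M * C = 2 - M^2 := by rw [hCdef]; field_simp
  have hC0 : 1/2 ≤ C := by
    rw [hCdef, le_div_iff₀ hM0]; nlinarith
  have hC1 : C ≤ 1 := by
    rw [hCdef, div_le_iff₀ hM0]; nlinarith
  obtain ⟨k, hkS, hkb, hkval⟩ : ∃ k : C(Y, ℝ), S k xs ≤ -(C * lam) ∧
      (∀ z, |k z| ≤ lam * v z) ∧ (k = lam • v ∨ k = -(lam • v)) := by
    rcases hk with h | h
    · refine ⟨lam • v, h, fun z => le_of_eq ?_, Or.inl rfl⟩
      rw [ContinuousMap.smul_apply, smul_eq_mul, abs_mul, abs_of_pos hlam,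
        abs_of_nonneg (hv01 z).1]
    · refine ⟨-(lam • v), h, fun z => le_of_eq ?_, Or.inr rfl⟩
      rw [ContinuousMap.neg_apply, abs_neg, ContinuousMap.smul_apply, smul_eq_mul, abs_mul,
        abs_of_pos hlam, abs_of_nonneg (hv01 z).1]
  -- lower bound on ‖lam•p - S k‖
  have hlow2 : (1 + C) * lam ≤ M * ‖T (lam • p) - k‖ := by
    have h1 : (1 + C) * lam ≤ ‖lam • p - S k‖ := by
      have hx : (lam • p - S k) xs = lam - S k xs := by
        rw [ContinuousMap.sub_apply, ContinuousMap.smul_apply, smul_eq_mul, hpxs, mul_one]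
      calc (1 + C) * lam ≤ |lam - S k xs| := by
            rw [abs_of_nonneg (by nlinarith [hkS, hlam, hC0] : (0:ℝ) ≤ lam - S k xs)]
            nlinarith [hkS, hlam, hC0]
      _ = |(lam • p - S k) xs| := by rw [hx]
      _ ≤ ‖lam • p - S k‖ := abs_apply_le_norm _ _
    calc (1 + C) * lam ≤ ‖lam • p - S k‖ := h1
    _ ≤ M * ‖T (lam • p) - T (S k)‖ := hp.low _ _
    _ = M * ‖T (lam • p) - k‖ := by rw [hp.hST]
  obtain ⟨y₃, hy₃⟩ := exists_max_abs hY (T (lam • p) - k)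
  have hy₃' : (1 + C) * lam ≤ M * |T (lam • p) y₃ - k y₃| := by
    calc (1 + C) * lam ≤ M * ‖T (lam • p) - k‖ := hlow2
    _ ≤ M * |(T (lam • p) - k) y₃| := mul_le_mul_of_nonneg_left hy₃ (le_of_lt hM0)
    _ = M * |T (lam • p) y₃ - k y₃| := by rw [ContinuousMap.sub_apply]
  have hTp : ∀ z, |T (lam • p) z| ≤ M * lam := by
    intro z
    calc |T (lam • p) z| ≤ ‖T (lam • p)‖ := abs_apply_le_norm _ _
    _ ≤ M * ‖lam • p‖ := hp.normT _
    _ ≤ M * lam := by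
        rw [norm_smul_cm, abs_of_pos hlam]
        have : ‖p‖ ≤ 1 := (ContinuousMap.norm_le p zero_le_one).mpr fun z => by
          rw [Real.norm_eq_abs, abs_le]; exact ⟨by linarith [(hp01 z).1], (hp01 z).2⟩
        nlinarith [this, norm_nonneg p, mul_pos hM0 hlam, hM0, hlam]
  -- key numeric facts
  have hcub : M^3 + M^2 - M - 2 < 0 := by nlinarith [hM3, hM6, hM11]
  have hgap : M * (M * lam) < (1 + C) * lam := by
    have h1 : M*(M^2 - 1) < M*C := by rw [hCM]; nlinarith [hcub]
    have h2 : M^2 - 1 < C := lt_of_mul_lt_mul_left h1 hM0.le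
    nlinarith [h2, hlam]
  have hnum : 2*M^2 + (11/10)*M - 3 ≤ C := by
    have h1 : (2*M^2 + (11/10)*M - 3) * M ≤ C * M := by
      have h2 : C * M = 2 - M^2 := by rw [mul_comm]; exact hCM
      nlinarith [hM3, hM6]
    exact le_of_mul_le_mul_right h1 hM0
  have hnumlam : (2*M^2 + (11/10)*M - 3)*lam ≤ C*lam :=
    mul_le_mul_of_nonneg_right hnum hlam.le
  -- case v y₃ = 0
  rcases eq_or_ne (v y₃) 0 with hv3 | hv3
  · have hk3 : k y₃ = 0 := by
      have h := hkb y₃; rw [hv3, mul_zero] at h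
      exact abs_eq_zero.mp (le_antisymm h (abs_nonneg _))
    rw [hk3, sub_zero] at hy₃'
    have h2 : M * |T (lam • p) y₃| ≤ M * (M * lam) :=
      mul_le_mul_of_nonneg_left (hTp y₃) (le_of_lt hM0)
    linarith [hy₃', h2, hgap]
  · have hΩ := hvsupp y₃ hv3
    have hky : |k y₃| ≤ lam := by
      have h := hkb y₃
      nlinarith [(hv01 y₃).2, h, hlam, abs_nonneg (k y₃)]
    have hkyl := abs_le.mp hky
    have hmulE : M * (T (lam • p) y₃ - k y₃) = M * T (lam • p) y₃ - M * k y₃ := by ring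
    rcases hkval with hkeq | hkeq
    · -- k = lam • v ≥ 0 pointwise; forced: M * Tp y₃ ≤ M * k y₃ - (1+C) lam
      have hky0 : 0 ≤ k y₃ := by
        rw [hkeq, ContinuousMap.smul_apply, smul_eq_mul]
        exact mul_nonneg (le_of_lt hlam) (hv01 y₃).1
      have hcase : M * T (lam • p) y₃ ≤ M * k y₃ - (1 + C) * lam := by
        rcases abs_cases (T (lam • p) y₃ - k y₃) with ⟨heq, -⟩ | ⟨heq, -⟩
        · exfalso
          rw [heq] at hy₃'
          have h3 : M * T (lam • p) y₃ ≤ M * (M * lam) := by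
            have := mul_le_mul_of_nonneg_left (abs_le.mp (hTp y₃)).2 hM0.le
            linarith
          have h4 : 0 ≤ M * k y₃ := mul_nonneg hM0.le hky0
          linarith [hy₃', hmulE, hgap]
        · rw [heq] at hy₃'
          have : M * (k y₃ - T (lam • p) y₃) = M * k y₃ - M * T (lam • p) y₃ := by ring
          linarith [hy₃']
      obtain ⟨w, hwval, hwd⟩ : ∃ w : C(X,ℝ), (C - 1/10) * lam < T w y₃ ∧
          (∀ z : X, |w z - lam * p z| ≤ lam) := by
        rcases hσ with h1 | h1
        · refine ⟨lam • u, by have h2 := hΩ.1; rw [h1] at h2; linarith, fun z => ?_⟩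
          rw [ContinuousMap.smul_apply, smul_eq_mul]
          rcases eq_or_ne (u z) 0 with h3 | h3
          · rw [h3, mul_zero, zero_sub, abs_neg, abs_mul, abs_of_pos hlam,
              abs_of_nonneg (hp01 z).1]
            nlinarith [(hp01 z).2]
          · rw [show p z = 0 by simpa using hp0 (subset_closure h3), mul_zero, sub_zero,
              abs_mul, abs_of_pos hlam, abs_of_nonneg (hu01 z).1]
            nlinarith [(hu01 z).2]
        · refine ⟨-(lam • u), by have h2 := hΩ.2; rw [h1] at h2; linarith, fun z => ?_⟩
          rw [ContinuousMap.neg_apply, ContinuousMap.smul_apply, smul_eq_mul]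
          rcases eq_or_ne (u z) 0 with h3 | h3
          · rw [h3, mul_zero, neg_zero, zero_sub, abs_neg, abs_mul, abs_of_pos hlam,
              abs_of_nonneg (hp01 z).1]
            nlinarith [(hp01 z).2]
          · rw [show p z = 0 by simpa using hp0 (subset_closure h3), mul_zero, sub_zero,
              abs_neg, abs_mul, abs_of_pos hlam, abs_of_nonneg (hu01 z).1]
            nlinarith [(hu01 z).2]
      have hwp : T w y₃ - T (lam • p) y₃ ≤ M * lam := by
        have h1 : ‖w - lam • p‖ ≤ lam := by
          refine (ContinuousMap.norm_le _ (le_of_lt hlam)).mpr fun z => ?_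
          rw [ContinuousMap.sub_apply, ContinuousMap.smul_apply, smul_eq_mul,
            Real.norm_eq_abs]
          exact hwd z
        have h2 : |T w y₃ - T (lam • p) y₃| ≤ M * lam := by
          calc |T w y₃ - T (lam • p) y₃| ≤ ‖T w - T (lam • p)‖ := by
                rw [← ContinuousMap.sub_apply]; exact abs_apply_le_norm _ _
          _ ≤ M * ‖w - lam • p‖ := hp.hTlip _ _
          _ ≤ M * lam := mul_le_mul_of_nonneg_left h1 (le_of_lt hM0)
        linarith [(abs_le.mp h2).2]
      have e1 : M * ((C - 1/10) * lam) < M * T w y₃ := mul_lt_mul_of_pos_left hwval hM0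
      have e2 : M * T w y₃ - M * T (lam • p) y₃ ≤ M * (M * lam) := by
        have h4 := mul_le_mul_of_nonneg_left hwp hM0.le
        linarith [mul_sub M (T w y₃) (T (lam • p) y₃), h4]
      have e3 : M * k y₃ ≤ M * lam := mul_le_mul_of_nonneg_left hkyl.2 hM0.le
      have hE1 : M * ((C - 1/10) * lam) = (2 - M^2) * lam - (M * lam)/10 := by
        linear_combination lam * hCM
      linarith [e1, e2, e3, hcase, hnumlam, hE1]
    · -- k = -(lam • v) ≤ 0 pointwise; forced: M * k y₃ + (1+C) lam ≤ M * Tp y₃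
      have hky0 : k y₃ ≤ 0 := by
        rw [hkeq, ContinuousMap.neg_apply, ContinuousMap.smul_apply, smul_eq_mul]
        exact neg_nonpos_of_nonneg (mul_nonneg (le_of_lt hlam) (hv01 y₃).1)
      have hcase : M * k y₃ + (1 + C) * lam ≤ M * T (lam • p) y₃ := by
        rcases abs_cases (T (lam • p) y₃ - k y₃) with ⟨heq, -⟩ | ⟨heq, -⟩
        · rw [heq] at hy₃'
          linarith [hy₃', hmulE]
        · exfalso
          rw [heq] at hy₃'
          have h5 : -(M*lam) ≤ T (lam • p) y₃ := (abs_le.mp (hTp y₃)).1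
          have h6 := mul_le_mul_of_nonneg_left h5 hM0.le
          have h7 : M * k y₃ ≤ 0 := mul_nonpos_of_nonneg_of_nonpos hM0.le hky0
          have h8 : M * (k y₃ - T (lam • p) y₃) = M * k y₃ - M * T (lam • p) y₃ := by ring
          linarith [hy₃', hgap, h6, h7, h8]
      obtain ⟨w, hwval, hwd⟩ : ∃ w : C(X,ℝ), T w y₃ < -((C - 1/10) * lam) ∧
          (∀ z : X, |w z - lam * p z| ≤ lam) := by
        rcases hσ with h1 | h1
        · refine ⟨-(lam • u), by have h2 := hΩ.2; rw [h1] at h2; linarith, fun z => ?_⟩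
          rw [ContinuousMap.neg_apply, ContinuousMap.smul_apply, smul_eq_mul]
          rcases eq_or_ne (u z) 0 with h3 | h3
          · rw [h3, mul_zero, neg_zero, zero_sub, abs_neg, abs_mul, abs_of_pos hlam,
              abs_of_nonneg (hp01 z).1]
            nlinarith [(hp01 z).2]
          · rw [show p z = 0 by simpa using hp0 (subset_closure h3), mul_zero, sub_zero,
              abs_neg, abs_mul, abs_of_pos hlam, abs_of_nonneg (hu01 z).1]
            nlinarith [(hu01 z).2]
        · refine ⟨lam • u, by have h2 := hΩ.1; rw [h1] at h2; linarith, fun z => ?_⟩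
          rw [ContinuousMap.smul_apply, smul_eq_mul]
          rcases eq_or_ne (u z) 0 with h3 | h3
          · rw [h3, mul_zero, zero_sub, abs_neg, abs_mul, abs_of_pos hlam,
              abs_of_nonneg (hp01 z).1]
            nlinarith [(hp01 z).2]
          · rw [show p z = 0 by simpa using hp0 (subset_closure h3), mul_zero, sub_zero,
              abs_mul, abs_of_pos hlam, abs_of_nonneg (hu01 z).1]
            nlinarith [(hu01 z).2]
      have hwp : T (lam • p) y₃ - T w y₃ ≤ M * lam := by
        have h1 : ‖w - lam • p‖ ≤ lam := by
          refine (ContinuousMap.norm_le _ (le_of_lt hlam)).mpr fun z => ?_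
          rw [ContinuousMap.sub_apply, ContinuousMap.smul_apply, smul_eq_mul,
            Real.norm_eq_abs]
          exact hwd z
        have h2 : |T w y₃ - T (lam • p) y₃| ≤ M * lam := by
          calc |T w y₃ - T (lam • p) y₃| ≤ ‖T w - T (lam • p)‖ := by
                rw [← ContinuousMap.sub_apply]; exact abs_apply_le_norm _ _
          _ ≤ M * ‖w - lam • p‖ := hp.hTlip _ _
          _ ≤ M * lam := mul_le_mul_of_nonneg_left h1 (le_of_lt hM0)
        linarith [(abs_le.mp h2).1]
      have e1 : M * T w y₃ < M * (-((C - 1/10) * lam)) := mul_lt_mul_of_pos_left hwval hM0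
      have e2 : M * T (lam • p) y₃ - M * T w y₃ ≤ M * (M * lam) := by
        have h4 := mul_le_mul_of_nonneg_left hwp hM0.le
        linarith [mul_sub M (T (lam • p) y₃) (T w y₃), h4]
      have e3 : -(M * lam) ≤ M * k y₃ := by
        have := mul_le_mul_of_nonneg_left hkyl.1 hM0.le
        linarith [this]
      have hE1 : M * (-((C - 1/10) * lam)) = -((2 - M^2) * lam) + (M * lam)/10 := by
        linear_combination (-lam) * hCM
      linarith [e1, e2, e3, hcase, hnumlam, hE1]

/-- Lemma B: a `T`-pin supply at `(x,y)` yields an `S`-pin supply at `(y,x)`. -/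
lemma supS_of_supT (hp : Pack M T S) (hX : Nonempty X) (hY : Nonempty Y)
    {x : X} {y : Y} {lam : ℝ} (hlam : 0 < lam) (hsup : SupT M T x y lam) :
    SupT M S y x lam := by
  intro VY WX hVY hyVY hWX hxWX
  obtain ⟨V'', hV''o, hxV'', hclV''⟩ : ∃ V'', IsOpen V'' ∧ x ∈ V'' ∧ closure V'' ⊆ WX := by
    obtain ⟨V'', h1, h2, h3⟩ := normal_exists_closure_subset isClosed_singleton hWX
      (singleton_subset_iff.mpr hxWX)
    exact ⟨V'', h1, h2 rfl, h3⟩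
  obtain ⟨u, x0, σ, yt, hB, hσ, hytV, hpin⟩ := hsup V'' VY hV''o hxV'' hVY hyVY
  have hΩopen : IsOpen (VY ∩ {z | ((2 - M^2)/M - 1/10) * lam < σ * T (lam • u) z} ∩
      {z | σ * T (-(lam • u)) z < -(((2 - M^2)/M - 1/10) * lam)}) := by
    refine (hVY.inter (isOpen_lt continuous_const ?_)).inter (isOpen_lt ?_ continuous_const)
    · exact continuous_const.mul (map_continuous (T (lam • u)))
    · exact continuous_const.mul (map_continuous (T (-(lam • u))))
  have hCstep : ((2 - M^2)/M - 1/10) * lam < (2 - M^2)/M * lam := by nlinarith [hlam]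
  have hytΩ : yt ∈ VY ∩ {z | ((2 - M^2)/M - 1/10) * lam < σ * T (lam • u) z} ∩
      {z | σ * T (-(lam • u)) z < -(((2 - M^2)/M - 1/10) * lam)} := by
    refine ⟨⟨hytV, ?_⟩, ?_⟩
    · exact lt_of_lt_of_le hCstep hpin.1
    · exact lt_of_le_of_lt hpin.2 (by linarith [hCstep])
  obtain ⟨v, hv⟩ := exists_bump hΩopen hytΩ
  obtain ⟨σ', xt, hσ', hpinS⟩ := pin_exists hp.symm hX hv hlam
  have hk : S (lam • v) xt ≤ -((2 - M^2)/M * lam) ∨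
      S (-(lam • v)) xt ≤ -((2 - M^2)/M * lam) := by
    rcases hσ' with h | h
    · right; have h2 := hpinS.2; rw [h, one_mul] at h2; exact h2
    · left; have h2 := hpinS.1; rw [h, neg_one_mul] at h2; linarith
  have hxt : xt ∈ closure {z | u z ≠ 0} := by
    refine link hp hY hlam hB.1 hσ hv.1 ?_ hk
    intro z hz
    have hzΩ := not_imp_comm.mp (hv.2.2 z) hz
    exact ⟨hzΩ.1.2, hzΩ.2⟩
  have hxtW : xt ∈ WX := by
    refine hclV'' (closure_mono ?_ hxt)
    intro z hz
    by_contra h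
    exact hz (hB.2.2 z h)
  exact ⟨v, yt, σ', xt, ⟨hv.1, hv.2.1, fun z hz => hv.2.2 z (fun hzΩ => hz hzΩ.1.1)⟩,
    hσ', hxtW, hpinS⟩

/-- Upper evaluation estimate. -/
lemma upI (hp : Pack M T S) {x : X} {y : Y} {s : ℝ} (hs : 0 < s)
    (hsup : SupT M T x y (M * s)) (f : C(X, ℝ)) (hf : ‖f‖ ≤ s) :
    |T f y| ≤ M * |f x| + 2*(M^2 - 1)*s := by
  have hM0 := hp.M0; have hM1 := hp.hM1
  have key : ∀ ε : ℝ, 0 < ε → |T f y| ≤ M * |f x| + 2*(M^2-1)*s + (2*M+1)*ε := by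
    intro ε hε
    have hVopen : IsOpen {z : X | |f z - f x| < ε} :=
      isOpen_lt (by continuity) continuous_const
    have hxV : x ∈ {z : X | |f z - f x| < ε} := by simp [hε]
    have hWopen : IsOpen {z : Y | |T f z - T f y| < ε} :=
      isOpen_lt (by continuity) continuous_const
    have hyW : y ∈ {z : Y | |T f z - T f y| < ε} := by simp [hε]
    obtain ⟨u, x0, σ, yt, hB, hσ, hytW, hpin⟩ := hsup _ _ hVopen hxV hWopen hyW
    have hnu : ‖u‖ = 1 := hB.norm_eq_one
    have hMs : (0:ℝ) < M * s := mul_pos hM0 hs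
    have htr1 : |T ((M*s) • u) yt - T (s • u) yt| ≤ M * ((M-1)*s) := by
      calc |T ((M*s) • u) yt - T (s • u) yt| ≤ ‖T ((M*s)•u) - T (s•u)‖ := by
            rw [← ContinuousMap.sub_apply]; exact abs_apply_le_norm _ _
      _ ≤ M * ‖(M*s)•u - s•u‖ := hp.hTlip _ _
      _ = M * ((M-1)*s) := by
          rw [← sub_smul, norm_smul_cm, hnu, mul_one,
            show M*s - s = (M-1)*s by ring, abs_of_nonneg (by nlinarith)]
    have htr2 : |T (-((M*s) • u)) yt - T (-(s • u)) yt| ≤ M * ((M-1)*s) := by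
      calc |T (-((M*s) • u)) yt - T (-(s • u)) yt| ≤ ‖T (-((M*s)•u)) - T (-(s•u))‖ := by
            rw [← ContinuousMap.sub_apply]; exact abs_apply_le_norm _ _
      _ ≤ M * ‖-((M*s)•u) - -(s•u)‖ := hp.hTlip _ _
      _ = M * ((M-1)*s) := by
          rw [show -((M*s)•u) - -(s•u) = -((M*s)•u - s•u) by ring, norm_neg, ← sub_smul,
            norm_smul_cm, hnu, mul_one, show M*s - s = (M-1)*s by ring,
            abs_of_nonneg (by nlinarith)]
    have hCm : (2 - M^2)/M * (M*s) = (2 - M^2) * s := by field_simp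
    have hpin1 : (2 + M - 2*M^2) * s ≤ σ * T (s • u) yt := by
      have h1 := hpin.1
      rw [hCm] at h1
      have h2 := abs_le.mp htr1
      rcases hσ with h | h <;> rw [h] at h1 ⊢ <;> [skip; skip] <;> nlinarith [h2.1, h2.2]
    have hpin2 : σ * T (-(s • u)) yt ≤ -((2 + M - 2*M^2) * s) := by
      have h1 := hpin.2
      rw [hCm] at h1
      have h2 := abs_le.mp htr2
      rcases hσ with h | h <;> rw [h] at h1 ⊢ <;> nlinarith [h2.1, h2.2]
    have hfz : ∀ z, |f z| ≤ s := fun z => le_trans (abs_apply_le_norm f z) hf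
    have hb1 : ‖f + s • u‖ ≤ s + max (f x) 0 + ε := by
      refine (ContinuousMap.norm_le _ (by positivity)).mpr fun z => ?_
      rw [ContinuousMap.add_apply, ContinuousMap.smul_apply, smul_eq_mul, Real.norm_eq_abs,
        abs_le]
      have h3 := abs_le.mp (hfz z)
      by_cases hzV : z ∈ {z : X | |f z - f x| < ε}
      · have h4 := abs_lt.mp (show |f z - f x| < ε from hzV)
        constructor
        · nlinarith [(hB.1 z).1, le_max_right (f x) 0, hs]
        · nlinarith [(hB.1 z).2, le_max_left (f x) 0, hs]
      · have hz0 : u z = 0 := hB.2.2 z hzV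
        rw [hz0, mul_zero, add_zero]
        constructor <;> nlinarith [le_max_right (f x) 0]
    have hb2 : ‖f - s • u‖ ≤ s + max (-(f x)) 0 + ε := by
      refine (ContinuousMap.norm_le _ (by positivity)).mpr fun z => ?_
      rw [ContinuousMap.sub_apply, ContinuousMap.smul_apply, smul_eq_mul, Real.norm_eq_abs,
        abs_le]
      have h3 := abs_le.mp (hfz z)
      by_cases hzV : z ∈ {z : X | |f z - f x| < ε}
      · have h4 := abs_lt.mp (show |f z - f x| < ε from hzV)
        constructor
        · nlinarith [(hB.1 z).2, le_max_left (-(f x)) 0, hs]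
        · nlinarith [(hB.1 z).1, le_max_right (-(f x)) 0, hs]
      · have hz0 : u z = 0 := hB.2.2 z hzV
        rw [hz0, mul_zero, sub_zero]
        constructor <;> nlinarith [le_max_right (-(f x)) 0]
    have hup1 : σ * T f yt ≤ -((2 + M - 2*M^2)*s) + M * (s + max (f x) 0 + ε) := by
      have h1 : |T f yt - T (-(s • u)) yt| ≤ M * (s + max (f x) 0 + ε) := by
        calc |T f yt - T (-(s • u)) yt| ≤ ‖T f - T (-(s•u))‖ := by
              rw [← ContinuousMap.sub_apply]; exact abs_apply_le_norm _ _
        _ ≤ M * ‖f - -(s•u)‖ := hp.hTlip _ _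
        _ = M * ‖f + s•u‖ := by rw [sub_neg_eq_add]
        _ ≤ M * (s + max (f x) 0 + ε) := mul_le_mul_of_nonneg_left hb1 hM0.le
      have h2 := abs_le.mp h1
      rcases hσ with h | h <;> rw [h] at hpin2 ⊢ <;> nlinarith [h2.1, h2.2, hpin2]
    have hup2 : -(σ * T f yt) ≤ -((2 + M - 2*M^2)*s) + M * (s + max (-(f x)) 0 + ε) := by
      have h1 : |T (s • u) yt - T f yt| ≤ M * (s + max (-(f x)) 0 + ε) := by
        calc |T (s • u) yt - T f yt| ≤ ‖T (s•u) - T f‖ := by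
              rw [← ContinuousMap.sub_apply]; exact abs_apply_le_norm _ _
        _ ≤ M * ‖s•u - f‖ := hp.hTlip _ _
        _ = M * ‖f - s•u‖ := by rw [norm_sub_rev]
        _ ≤ M * (s + max (-(f x)) 0 + ε) := mul_le_mul_of_nonneg_left hb2 hM0.le
      have h2 := abs_le.mp h1
      rcases hσ with h | h <;> rw [h] at hpin1 ⊢ <;> nlinarith [h2.1, h2.2, hpin1]
    have hmax1 : max (f x) 0 ≤ |f x| := max_le (le_abs_self _) (abs_nonneg _)
    have hmax2 : max (-(f x)) 0 ≤ |f x| := by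
      refine max_le ?_ (abs_nonneg _)
      rw [← abs_neg]; exact le_abs_self _
    have habs : |T f yt| ≤ -((2 + M - 2*M^2)*s) + M*(s + |f x| + ε) := by
      rcases abs_cases (T f yt) with ⟨he, -⟩ | ⟨he, -⟩ <;> rw [he] <;>
        rcases hσ with h | h <;> rw [h] at hup1 hup2 <;>
        nlinarith [hup1, hup2, hmax1, hmax2, hM0, hM1]
    have hWyt : |T f yt - T f y| < ε := hytW
    have hfinal : |T f y| ≤ |T f yt| + ε := by
      have h6 := abs_sub_abs_le_abs_sub (T f y) (T f yt)
      rw [abs_sub_comm] at h6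
      linarith
    nlinarith [habs, hfinal, hε, hM1]
  by_contra hcon
  push_neg at hcon
  have hd : (0:ℝ) < 2*(2*M+1) := by linarith
  have hδpos : 0 < (|T f y| - (M * |f x| + 2*(M^2-1)*s)) / (2*(2*M+1)) :=
    div_pos (by linarith) hd
  have h1 := key _ hδpos
  have h2 : (2*M+1) * ((|T f y| - (M * |f x| + 2*(M^2-1)*s)) / (2*(2*M+1)))
      = (|T f y| - (M * |f x| + 2*(M^2-1)*s))/2 := by field_simp
  linarith [h1, h2]

/-- Lower evaluation estimate (in multiplied form). -/
lemma lowI (hp : Pack M T S) {x : X} {y : Y} {s : ℝ} (hs : 0 < s)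
    (hsupS : SupT M S y x (M * s)) (f : C(X, ℝ)) (hf : ‖f‖ ≤ s) :
    |f x| ≤ M * |T f y| + 2*(M^2 - 1)*s := by
  have hM0 := hp.M0; have hM1 := hp.hM1
  have hMs : (0:ℝ) < M * s := mul_pos hM0 hs
  have key : ∀ ε : ℝ, 0 < ε → |f x| ≤ M * |T f y| + 2*(M^2-1)*s + (M+2)*ε := by
    intro ε hε
    have hWopen : IsOpen {z : Y | |T f z - T f y| < ε} :=
      isOpen_lt (by continuity) continuous_const
    have hyW : y ∈ {z : Y | |T f z - T f y| < ε} := by simp [hε]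
    have hVopen : IsOpen {z : X | |f z - f x| < ε} :=
      isOpen_lt (by continuity) continuous_const
    have hxV : x ∈ {z : X | |f z - f x| < ε} := by simp [hε]
    obtain ⟨v, y0, σ, xt, hBv, hσ, hxtV, hpinS⟩ := hsupS _ _ hWopen hyW hVopen hxV
    have hCm : (2 - M^2)/M * (M*s) = (2 - M^2) * s := by field_simp
    have hTfb : ∀ z, |T f z| ≤ M * s := by
      intro z
      calc |T f z| ≤ ‖T f‖ := abs_apply_le_norm _ _
      _ ≤ M * ‖f‖ := hp.normT f
      _ ≤ M * s := mul_le_mul_of_nonneg_left hf hM0.le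
    -- both signed anchors
    obtain ⟨km, hkm, hkmb⟩ : ∃ k : C(Y,ℝ), S k xt ≤ -((2 - M^2)*s) ∧
        (∀ z, |k z| ≤ M*s*(v z)) := by
      have hb : ∀ z, |((M*s) • v) z| ≤ M*s*(v z) := fun z => by
        rw [ContinuousMap.smul_apply, smul_eq_mul, abs_mul, abs_of_pos hMs,
          abs_of_nonneg (hBv.1 z).1]
      rcases hσ with h | h
      · refine ⟨-((M*s) • v), ?_, fun z => by rw [ContinuousMap.neg_apply, abs_neg]; exact hb z⟩
        have h2 := hpinS.2; rw [h, one_mul, hCm] at h2; exact h2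
      · refine ⟨(M*s) • v, ?_, hb⟩
        have h2 := hpinS.1; rw [h, neg_one_mul, hCm] at h2; linarith
    obtain ⟨kp, hkp, hkpb⟩ : ∃ k : C(Y,ℝ), (2 - M^2)*s ≤ S k xt ∧
        (∀ z, |k z| ≤ M*s*(v z)) := by
      have hb : ∀ z, |((M*s) • v) z| ≤ M*s*(v z) := fun z => by
        rw [ContinuousMap.smul_apply, smul_eq_mul, abs_mul, abs_of_pos hMs,
          abs_of_nonneg (hBv.1 z).1]
      rcases hσ with h | h
      · refine ⟨(M*s) • v, ?_, hb⟩
        have h2 := hpinS.1; rw [h, one_mul, hCm] at h2; exact h2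
      · refine ⟨-((M*s) • v), ?_, fun z => by rw [ContinuousMap.neg_apply, abs_neg]; exact hb z⟩
        have h2 := hpinS.2; rw [h, neg_one_mul, hCm] at h2; linarith
    have hupbound : ∀ k : C(Y,ℝ), (∀ z, |k z| ≤ M*s*(v z)) →
        ‖T f - k‖ ≤ |T f y| + ε + M*s := by
      intro k hkb
      refine (ContinuousMap.norm_le _ (by positivity)).mpr fun z => ?_
      rw [ContinuousMap.sub_apply, Real.norm_eq_abs]
      rcases eq_or_ne (v z) 0 with hz | hz
      · have hk0 : k z = 0 := by
          have h1 := hkb z; rw [hz, mul_zero] at h1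
          exact abs_eq_zero.mp (le_antisymm h1 (abs_nonneg _))
        rw [hk0, sub_zero]
        have := hTfb z
        have h2 := abs_nonneg (T f y)
        linarith
      · have hzW : z ∈ {z : Y | |T f z - T f y| < ε} := by
          by_contra h; exact hz (hBv.2.2 z h)
        have h1 : |T f z| ≤ |T f y| + ε := by
          have h5 := abs_sub_abs_le_abs_sub (T f z) (T f y)
          have h6 : |T f z - T f y| < ε := hzW
          linarith
        have h2 : |k z| ≤ M*s := le_trans (hkb z)
          (by nlinarith [(hBv.1 z).2, (hBv.1 z).1])
        have h7 := abs_add_le (T f z) (-(k z))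
        rw [abs_neg] at h7
        rw [sub_eq_add_neg]
        linarith
    have hxtV' := abs_lt.mp (show |f xt - f x| < ε from hxtV)
    rcases le_or_gt 0 (f x) with ht | ht
    · -- use km
      have hlow : f x + (2 - M^2)*s - ε ≤ ‖f - S km‖ := by
        have h1 : f x + (2-M^2)*s - ε ≤ f xt - S km xt := by linarith [hkm]
        calc f x + (2-M^2)*s - ε ≤ f xt - S km xt := h1
        _ ≤ |f xt - S km xt| := le_abs_self _
        _ = |(f - S km) xt| := by rw [ContinuousMap.sub_apply]
        _ ≤ ‖f - S km‖ := abs_apply_le_norm _ _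
      have hmid : ‖f - S km‖ ≤ M * ‖T f - km‖ := by
        have h1 := hp.low f (S km); rwa [hp.hST] at h1
      have hup := mul_le_mul_of_nonneg_left (hupbound km hkmb) hM0.le
      rw [abs_of_nonneg ht]
      nlinarith [hlow, hmid, hup, hε, hM1]
    · -- use kp
      have hlow : -(f x) + (2 - M^2)*s - ε ≤ ‖f - S kp‖ := by
        have h1 : -(f x) + (2-M^2)*s - ε ≤ S kp xt - f xt := by linarith [hkp]
        calc -(f x) + (2-M^2)*s - ε ≤ S kp xt - f xt := h1
        _ ≤ |S kp xt - f xt| := le_abs_self _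
        _ = |(f - S kp) xt| := by rw [abs_sub_comm, ContinuousMap.sub_apply]
        _ ≤ ‖f - S kp‖ := abs_apply_le_norm _ _
      have hmid : ‖f - S kp‖ ≤ M * ‖T f - kp‖ := by
        have h1 := hp.low f (S kp); rwa [hp.hST] at h1
      have hup := mul_le_mul_of_nonneg_left (hupbound kp hkpb) hM0.le
      rw [abs_of_neg ht]
      nlinarith [hlow, hmid, hup, hε, hM1]
  by_contra hcon
  push_neg at hcon
  have hd : (0:ℝ) < 2*(M+2) := by linarith
  have hδpos : 0 < (|f x| - (M * |T f y| + 2*(M^2-1)*s)) / (2*(M+2)) :=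
    div_pos (by linarith) hd
  have h1 := key _ hδpos
  have h2 : (M+2) * ((|f x| - (M * |T f y| + 2*(M^2-1)*s)) / (2*(M+2)))
      = (|f x| - (M * |T f y| + 2*(M^2-1)*s))/2 := by field_simp
  linarith [h1, h2]

/-- The closed graph relation. -/
def Good (M : ℝ) (T : C(X, ℝ) → C(Y, ℝ)) (S : C(Y, ℝ) → C(X, ℝ)) (s : ℝ) (x : X) (y : Y) :
    Prop :=
  (∀ f : C(X,ℝ), ‖f‖ ≤ s →
    |T f y| ≤ M*|f x| + 2*(M^2-1)*s ∧ |f x| ≤ M*|T f y| + 2*(M^2-1)*s) ∧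
  (∀ g : C(Y,ℝ), ‖g‖ ≤ s →
    |S g x| ≤ M*|g y| + 2*(M^2-1)*s ∧ |g y| ≤ M*|S g x| + 2*(M^2-1)*s)

lemma good_symm {s : ℝ} {x : X} {y : Y} : Good M T S s x y ↔ Good M S T s y x :=
  ⟨fun h => ⟨h.2, h.1⟩, fun h => ⟨h.2, h.1⟩⟩

lemma good_total (hp : Pack M T S) (hX : Nonempty X) (hY : Nonempty Y) (x : X)
    {s : ℝ} (hs : 0 < s) : ∃ y, Good M T S s x y := by
  have hMs : 0 < M * s := mul_pos hp.M0 hs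
  obtain ⟨y, hy⟩ := exists_K hp hY x hMs
  have hsupT : SupT M T x y (M * s) := K_supT hy
  have hsupS : SupT M S y x (M * s) := supS_of_supT hp hX hY hMs hsupT
  exact ⟨y, fun f hf => ⟨upI hp hs hsupT f hf, lowI hp hs hsupS f hf⟩,
    fun g hg => ⟨upI hp.symm hs hsupS g hg, lowI hp.symm hs hsupT g hg⟩⟩

lemma exists_sep {Z : Type} [TopologicalSpace Z] [CompactSpace Z] [T2Space Z]
    {a b : Z} (hab : a ≠ b) : ∃ h : C(Z,ℝ), h a = 1 ∧ h b = 0 ∧ ‖h‖ ≤ 1 := by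
  obtain ⟨h, h0, h1, h01⟩ := exists_continuous_zero_one_of_isClosed
    (isClosed_singleton (x := b)) (isClosed_singleton (x := a))
    ((Set.disjoint_singleton).mpr (Ne.symm hab))
  refine ⟨h, by simpa using h1 rfl, by simpa using h0 rfl,
    (ContinuousMap.norm_le _ zero_le_one).mpr fun z => ?_⟩
  rw [Real.norm_eq_abs, abs_le]; exact ⟨by linarith [(h01 z).1], (h01 z).2⟩

lemma good_unique (hp : Pack M T S) {s : ℝ} (hs : 0 < s) {x : X} {y y' : Y}
    (h1 : Good M T S s x y) (h2 : Good M T S s x y') : y = y' := by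
  by_contra hne
  obtain ⟨h, hha, hhb, hhn⟩ := exists_sep hne
  have hgn : ‖s • h‖ ≤ s := by
    rw [norm_smul_cm, abs_of_pos hs]; nlinarith [hhn]
  have e1 := (h1.2 (s • h) hgn).2
  have e2 := (h2.2 (s • h) hgn).1
  have hgy : (s • h) y = s := by
    rw [ContinuousMap.smul_apply, smul_eq_mul, hha, mul_one]
  have hgy' : (s • h) y' = 0 := by
    rw [ContinuousMap.smul_apply, smul_eq_mul, hhb, mul_zero]
  rw [hgy, abs_of_pos hs] at e1
  rw [hgy', abs_zero, mul_zero, zero_add] at e2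
  have e3 := mul_le_mul_of_nonneg_left e2 hp.M0.le
  nlinarith [hp.hM3, hp.hM6, hp.hM11, e1, e3, hs]

lemma good_inj (hp : Pack M T S) {s : ℝ} (hs : 0 < s) {x x' : X} {y : Y}
    (h1 : Good M T S s x y) (h2 : Good M T S s x' y) (hne : x ≠ x') : False := by
  obtain ⟨h, hha, hhb, hhn⟩ := exists_sep hne
  have hgn : ‖s • h‖ ≤ s := by
    rw [norm_smul_cm, abs_of_pos hs]; nlinarith [hhn]
  have e1 := (h1.1 (s • h) hgn).2
  have e2 := (h2.1 (s • h) hgn).1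
  have hgx : (s • h) x = s := by
    rw [ContinuousMap.smul_apply, smul_eq_mul, hha, mul_one]
  have hgx' : (s • h) x' = 0 := by
    rw [ContinuousMap.smul_apply, smul_eq_mul, hhb, mul_zero]
  rw [hgx, abs_of_pos hs] at e1
  rw [hgx', abs_zero, mul_zero, zero_add] at e2
  have e3 := mul_le_mul_of_nonneg_left e2 hp.M0.le
  nlinarith [hp.hM3, hp.hM6, hp.hM11, e1, e3, hs]

lemma good_chain (hp : Pack M T S) {s s' : ℝ} (hs : 0 < s) (hss' : s ≤ s')
    (hs' : s' ≤ (25/23)*s) {x : X} {y y' : Y}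
    (h1 : Good M T S s x y) (h2 : Good M T S s' x y') : y = y' := by
  by_contra hne
  obtain ⟨h, hha, hhb, hhn⟩ := exists_sep hne
  have hs'0 : 0 < s' := lt_of_lt_of_le hs hss'
  have hgn : ‖s • h‖ ≤ s := by
    rw [norm_smul_cm, abs_of_pos hs]; nlinarith [hhn]
  have hg'n : ‖s' • h‖ ≤ s' := by
    rw [norm_smul_cm, abs_of_pos hs'0]; nlinarith [hhn]
  have e1 := (h1.2 (s • h) hgn).2
  have e2 := (h2.2 (s' • h) hg'n).1
  have hgy : (s • h) y = s := by
    rw [ContinuousMap.smul_apply, smul_eq_mul, hha, mul_one]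
  have hgy' : (s' • h) y' = 0 := by
    rw [ContinuousMap.smul_apply, smul_eq_mul, hhb, mul_zero]
  rw [hgy, abs_of_pos hs] at e1
  rw [hgy', abs_zero, mul_zero, zero_add] at e2
  have hbridge : |S (s • h) x - S (s' • h) x| ≤ M * (s' - s) := by
    calc |S (s • h) x - S (s' • h) x| ≤ ‖S (s • h) - S (s' • h)‖ := by
          rw [← ContinuousMap.sub_apply]; exact abs_apply_le_norm _ _
    _ ≤ M * ‖s • h - s' • h‖ := hp.hSlip _ _
    _ ≤ M * (s' - s) := by
        rw [← sub_smul, norm_smul_cm]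
        have h5 : |s - s'| = s' - s := by rw [abs_sub_comm, abs_of_nonneg (by linarith)]
        rw [h5]
        have h6 : (s'-s)*‖h‖ ≤ (s'-s) := by
          nlinarith [norm_nonneg h, hhn, hss', mul_nonneg (sub_nonneg.2 hss') (norm_nonneg h)]
        exact mul_le_mul_of_nonneg_left h6 hp.M0.le
  have e3 : |S (s • h) x| ≤ |S (s' • h) x| + M * (s'-s) := by
    have h5 := abs_sub_abs_le_abs_sub (S (s • h) x) (S (s' • h) x)
    linarith
  have e4 := mul_le_mul_of_nonneg_left e3 hp.M0.le
  have e5 := mul_le_mul_of_nonneg_left e2 hp.M0.le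
  have hpoly : 50*M^3 + 48*M^2 - 50*M - 69 < 0 := by
    nlinarith [hp.hM3, hp.hM6, hp.hM11]
  have hpolys := mul_neg_of_neg_of_pos hpoly hs
  have hc1 : (0:ℝ) ≤ 2*M*(M^2-1) := by nlinarith [hp.hM1]
  have e6 : 2*M*(M^2-1)*s' ≤ 2*M*(M^2-1)*((25/23)*s) := mul_le_mul_of_nonneg_left hs' hc1
  have e7 : M^2*(s'-s) ≤ M^2*((25/23)*s - s) :=
    mul_le_mul_of_nonneg_left (by linarith) (sq_nonneg M)
  nlinarith [e1, e4, e5, e6, e7, hpolys, hp.M0, hs]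

lemma good_closed {s : ℝ} : IsClosed {p : X × Y | Good M T S s p.1 p.2} := by
  have c1 : ∀ f : C(X,ℝ), Continuous fun p : X × Y => |f p.1| :=
    fun f => ((map_continuous f).comp continuous_fst).abs
  have c2 : ∀ f : C(X,ℝ), Continuous fun p : X × Y => |T f p.2| :=
    fun f => ((map_continuous (T f)).comp continuous_snd).abs
  have c3 : ∀ g : C(Y,ℝ), Continuous fun p : X × Y => |g p.2| :=
    fun g => ((map_continuous g).comp continuous_snd).abs
  have c4 : ∀ g : C(Y,ℝ), Continuous fun p : X × Y => |S g p.1| :=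
    fun g => ((map_continuous (S g)).comp continuous_fst).abs
  have heq : {p : X × Y | Good M T S s p.1 p.2} =
      (⋂ (f : C(X,ℝ)) (_ : ‖f‖ ≤ s),
        ({p : X × Y | |T f p.2| ≤ M*|f p.1| + 2*(M^2-1)*s} ∩
         {p : X × Y | |f p.1| ≤ M*|T f p.2| + 2*(M^2-1)*s})) ∩
      (⋂ (g : C(Y,ℝ)) (_ : ‖g‖ ≤ s),
        ({p : X × Y | |S g p.1| ≤ M*|g p.2| + 2*(M^2-1)*s} ∩
         {p : X × Y | |g p.2| ≤ M*|S g p.1| + 2*(M^2-1)*s})) := by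
    ext p
    simp only [Good, mem_inter_iff, mem_iInter, mem_setOf_eq]
  rw [heq]
  refine IsClosed.inter (isClosed_iInter fun f => isClosed_iInter fun _ => IsClosed.inter ?_ ?_)
    (isClosed_iInter fun g => isClosed_iInter fun _ => IsClosed.inter ?_ ?_)
  · exact isClosed_le (c2 f) ((continuous_const.mul (c1 f)).add continuous_const)
  · exact isClosed_le (c1 f) ((continuous_const.mul (c2 f)).add continuous_const)
  · exact isClosed_le (c4 g) ((continuous_const.mul (c3 g)).add continuous_const)
  · exact isClosed_le (c3 g) ((continuous_const.mul (c4 g)).add continuous_const)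

end CBS

open CBS Set in
/-- The Lipschitz (`L = 0`) case of the coarse Banach-Stone theorem. -/
theorem stmt_14 {X Y : Type} [TopologicalSpace X] [CompactSpace X] [T2Space X]
    [TopologicalSpace Y] [CompactSpace Y] [T2Space Y]
    (M : ℝ) (hM1 : 1 ≤ M) (hM2 : M < Real.sqrt 1.2)
    (T : C(X, ℝ) → C(Y, ℝ)) (hbij : Function.Bijective T) (h0 : T 0 = 0)
    (hTlow : ∀ f g : C(X, ℝ), (1 / M) * ‖f - g‖ ≤ ‖T f - T g‖)
    (hTup : ∀ f g : C(X, ℝ), ‖T f - T g‖ ≤ M * ‖f - g‖) :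
    ∃ φ : X ≃ₜ Y, ∀ (f : C(X, ℝ)) (x : X),
      abs (|T f (φ x)| - |f x|) ≤ 5 * (M ^ 2 - M) * ‖f‖ := by
  have hM0 : 0 < M := lt_of_lt_of_le one_pos hM1
  have hM6 : M ^ 2 ≤ 6/5 := by
    have h1 := (Real.lt_sqrt hM0.le).mp hM2
    norm_num at h1
    linarith
  by_cases hX : Nonempty X
  · -- main case
    have hY : Nonempty Y := by
      by_contra hY
      haveI hYe : IsEmpty Y := not_nonempty_iff.mp hY
      have h1 : T 0 = T (ContinuousMap.const X 1) := ContinuousMap.ext fun y => isEmptyElim y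
      have h2 := hbij.injective h1
      obtain ⟨x₀⟩ := hX
      have h3 := congrArg (fun f : C(X,ℝ) => f x₀) h2
      simp at h3
    set e := Equiv.ofBijective T hbij with he
    set S : C(Y,ℝ) → C(X,ℝ) := fun g => e.symm g with hSdef
    have hTS : ∀ f, S (T f) = f := fun f => e.symm_apply_apply f
    have hST : ∀ g, T (S g) = g := fun g => e.apply_symm_apply g
    have hS0 : S 0 = 0 := by rw [← h0, hTS]
    have hSlip : ∀ g₁ g₂, ‖S g₁ - S g₂‖ ≤ M * ‖g₁ - g₂‖ := by
      intro g₁ g₂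
      have h1 := hTlow (S g₁) (S g₂)
      rw [hST, hST] at h1
      have h2 : M * (1/M * ‖S g₁ - S g₂‖) = ‖S g₁ - S g₂‖ := by field_simp
      have h3 := mul_le_mul_of_nonneg_left h1 hM0.le
      linarith
    have hpk : Pack M T S := ⟨hM1, hM6, hTS, hST, h0, hS0, hTup, hSlip⟩
    have htot : ∀ x : X, ∀ s : ℝ, 0 < s → ∃ y, Good M T S s x y :=
      fun x s hs => good_total hpk hX hY x hs
    set φ : X → Y := fun x => Classical.choose (htot x 1 one_pos) with hφdef
    have hφ1 : ∀ x, Good M T S 1 x (φ x) := fun x => Classical.choose_spec (htot x 1 one_pos)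
    -- all scales determine the same point
    have hall : ∀ x : X, ∀ s : ℝ, 0 < s → ∀ y, Good M T S s x y → y = φ x := by
      intro x
      have hstep : ∀ s s' : ℝ, 0 < s → s ≤ s' → s' ≤ (25/23)*s →
          ((∀ y, Good M T S s x y → y = φ x) ↔
           (∀ y, Good M T S s' x y → y = φ x)) := by
        intro s s' hs hss' hs'
        have hs'0 : 0 < s' := lt_of_lt_of_le hs hss'
        constructor
        · intro hQ y' hy'
          obtain ⟨y, hy⟩ := htot x s hs
          exact (good_chain hpk hs hss' hs' hy hy') ▸ hQ y hy
        · intro hQ y hy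
          obtain ⟨y', hy'⟩ := htot x s' hs'0
          rw [good_chain hpk hs hss' hs' hy hy']
          exact hQ y' hy'
      have hbase : ∀ y, Good M T S 1 x y → y = φ x :=
        fun y hy => good_unique hpk one_pos hy (hφ1 x)
      have hq0 : (0:ℝ) < 25/23 := by norm_num
      have hq1 : (1:ℝ) < 25/23 := by norm_num
      have hqe : ((25:ℝ)/23) ≠ 0 := by norm_num
      have hpow : ∀ n : ℤ, ∀ y, Good M T S ((25/23:ℝ)^n) x y → y = φ x := by
        intro n
        induction n using Int.induction_on with
        | zero => simpa using hbase
        | succ n ih =>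
            have h1 : (0:ℝ) < (25/23:ℝ)^(n:ℤ) := zpow_pos hq0 _
            have h2 : ((25/23:ℝ))^((n:ℤ)+1) = (25/23) * (25/23)^(n:ℤ) := by
              rw [zpow_add_one₀ hqe]; ring
            refine (hstep ((25/23)^(n:ℤ)) ((25/23)^((n:ℤ)+1)) h1 ?_ ?_).mp ih
            · rw [h2]; nlinarith [h1]
            · rw [h2]
        | pred n ih =>
            have h1 : (0:ℝ) < (25/23:ℝ)^(-(n:ℤ)-1) := zpow_pos hq0 _
            have h2 : ((25/23:ℝ))^(-(n:ℤ)) = (25/23) * (25/23)^(-(n:ℤ)-1) := by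
              rw [show -(n:ℤ) = (-(n:ℤ)-1) + 1 by ring, zpow_add_one₀ hqe]; ring
            refine (hstep ((25/23)^(-(n:ℤ)-1)) ((25/23)^(-(n:ℤ))) h1 ?_ ?_).mpr ?_
            · rw [h2]; nlinarith [h1]
            · rw [h2]
            · exact ih
      intro s hs y hy
      obtain ⟨n, hn1, hn2⟩ := exists_mem_Ico_zpow hs hq1
      have h1 : (0:ℝ) < (25/23:ℝ)^n := zpow_pos hq0 _
      refine (hstep ((25/23)^n) s h1 hn1 ?_).mp (hpow n) y hy
      have h2 : ((25/23:ℝ))^(n+1) = (25/23) * (25/23)^n := by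
        rw [zpow_add_one₀ hqe]; ring
      rw [h2] at hn2
      linarith
    have hGood : ∀ (x : X) (s : ℝ), 0 < s → Good M T S s x (φ x) := by
      intro x s hs
      obtain ⟨y, hy⟩ := htot x s hs
      rw [← hall x s hs y hy]
      exact hy
    have hinj : Function.Injective φ := by
      intro x x' hxy
      by_contra hne
      exact good_inj hpk one_pos (hφ1 x) (hxy ▸ hφ1 x') hne
    have hsurj : Function.Surjective φ := by
      intro y
      obtain ⟨x, hx⟩ := good_total hpk.symm hY hX y one_pos
      exact ⟨x, (good_unique hpk one_pos (good_symm.mpr hx) (hφ1 x)).symm⟩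
    have hcont : Continuous φ := by
      rw [continuous_iff_isClosed]
      intro C hC
      have himg : φ ⁻¹' C = Prod.fst '' ({p : X × Y | Good M T S 1 p.1 p.2} ∩ univ ×ˢ C) := by
        ext x
        constructor
        · intro hx
          exact ⟨(x, φ x), ⟨hφ1 x, ⟨trivial, hx⟩⟩, rfl⟩
        · rintro ⟨⟨x', y'⟩, ⟨hg, -, hyC⟩, rfl⟩
          have h1 : y' = φ x' := hall x' 1 one_pos y' hg
          show φ x' ∈ C
          rwa [← h1]
      rw [himg]
      exact (((good_closed.inter (isClosed_univ.prod hC)).isCompact).image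
        continuous_fst).isClosed
    have hconte : Continuous ⇑(Equiv.ofBijective φ ⟨hinj, hsurj⟩) := hcont
    refine ⟨hconte.homeoOfEquivCompactToT2, ?_⟩
    intro f x
    rcases eq_or_ne f 0 with rfl | hf
    · simp [h0]
    · have hs : 0 < ‖f‖ := norm_pos_iff.mpr hf
      have hG := hGood x ‖f‖ hs
      have e1 := (hG.1 f le_rfl).1
      have e2 := (hG.1 f le_rfl).2
      have hfx : |f x| ≤ ‖f‖ := abs_apply_le_norm f x
      have hTf : |T f (φ x)| ≤ M * ‖f‖ := le_trans (abs_apply_le_norm _ _)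
        (le_trans (hpk.normT f) (by nlinarith))
      have happ : hconte.homeoOfEquivCompactToT2 x = φ x := rfl
      rw [happ, abs_le]
      constructor
      · nlinarith [e2, hTf, sq_nonneg (M-1), hs, abs_nonneg (T f (φ x)), abs_nonneg (f x)]
      · nlinarith [e1, hfx, sq_nonneg (M-1), hs, abs_nonneg (T f (φ x)), abs_nonneg (f x)]
  · -- degenerate case
    haveI hXe : IsEmpty X := not_nonempty_iff.mp hX
    haveI hYe : IsEmpty Y := by
      by_contra hY
      haveI hYne : Nonempty Y := not_isEmpty_iff.mp hY
      obtain ⟨f, hfeq⟩ := hbij.surjective (ContinuousMap.const Y 1)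
      have h1 : f = 0 := ContinuousMap.ext fun x => isEmptyElim x
      rw [h1, h0] at hfeq
      obtain ⟨y₀⟩ := hYne
      have h2 := congrArg (fun g : C(Y,ℝ) => g y₀) hfeq
      simp at h2
    exact ⟨{ toEquiv := Equiv.equivOfIsEmpty X Y,
             continuous_toFun := continuous_iff_continuousAt.mpr fun a => isEmptyElim a,
             continuous_invFun := continuous_iff_continuousAt.mpr fun a => isEmptyElim a },
           fun f x => isEmptyElim x⟩
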